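/- Let H₁₆ ⊆ 𝔽₂¹⁶ be the extended Hamming code of length 16, i.e., the dual of the code spanned by the all-ones vector together with the four vectors v_j (j = 0,1,2,3) where (v_j)_i equals the j-th binary digit of i. Then the supports of the weight-4 codewords of H₁₆ form a Steiner system S(3,4,16): every 3-element subset of the 16 coordinates is contained in the support of exactly one weight-4 codeword. -/

import Mathlib

/-- The first-order Reed–Muller code generators of length 16: the all-ones vector and the
four coordinate-bit vectors. -/
def rm14Gens : Set (Fin 16 → ZMod 2) :=
  {fun _ => 1} ∪ Set.range (fun (j : Fin 4) (i : Fin 16) =>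
    if Nat.testBit i.val j.val then 1 else 0)

/-- The extended Hamming code of length 16: the dual of the code spanned by the all-ones
vector and the four coordinate-bit vectors. -/
def ham16 : Set (Fin 16 → ZMod 2) :=
  {c | ∀ d ∈ Submodule.span (ZMod 2) rm14Gens, ∑ i, c i * d i = 0}

lemma zmod2_ne_zero {a : ZMod 2} (h : a ≠ 0) : a = 1 := by revert a; decide

lemma mem_ham16_iff (c : Fin 16 → ZMod 2) :
    c ∈ ham16 ↔ (∑ i, c i = 0) ∧
      ∀ j : Fin 4, ∑ i, c i * (if Nat.testBit i.val j.val then 1 else 0) = 0 := by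
  constructor
  · intro h
    refine ⟨?_, fun j => ?_⟩
    · have := h (fun _ => 1) (Submodule.subset_span (Or.inl rfl))
      simpa using this
    · exact h _ (Submodule.subset_span (Or.inr ⟨j, rfl⟩))
  · rintro ⟨h1, h2⟩ d hd
    induction hd using Submodule.span_induction with
    | mem d hd =>
      rcases hd with h | ⟨j, rfl⟩
      · rw [Set.mem_singleton_iff] at h
        subst h; simpa using h1
      · exact h2 j
    | zero => simp
    | add x y hx hy ihx ihy =>
      simp only [Pi.add_apply, mul_add, Finset.sum_add_distrib, ihx, ihy, add_zero]
    | smul r x hx ih =>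
      simp only [Pi.smul_apply, smul_eq_mul, mul_left_comm, ← Finset.mul_sum, ih, mul_zero]

lemma sum_support (c : Fin 16 → ZMod 2) (d : Fin 16 → ZMod 2) :
    ∑ i, c i * d i = ∑ i ∈ Finset.univ.filter (fun i => c i ≠ 0), d i := by
  rw [← Finset.sum_filter_of_ne (p := fun i => c i ≠ 0) (s := Finset.univ)
      (f := fun i => c i * d i) (by intro x _ hx h0; simp [h0] at hx)]
  refine Finset.sum_congr rfl fun i hi => ?_
  rw [zmod2_ne_zero (Finset.mem_filter.mp hi).2, one_mul]

lemma zmod2_four (p q r s : Bool)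
    (h : (if p then (1:ZMod 2) else 0) + ((if q then (1:ZMod 2) else 0)
      + ((if r then (1:ZMod 2) else 0) + (if s then (1:ZMod 2) else 0))) = 0) :
    p = (q ^^ (r ^^ s)) := by
  cases p <;> cases q <;> cases r <;> cases s <;> simp_all <;> exact absurd h (by decide)

lemma nat_xor3 {a b e : ℕ} (h : a ^^^ (b ^^^ e) = a) : b = e := by
  have := congrArg (fun t => a ^^^ t) h
  simp only [← Nat.xor_assoc, Nat.xor_self, Nat.zero_xor] at this
  exact xor_eq_zero_iff.mp this

lemma xor_rot1 (a b e : ℕ) : a ^^^ (b ^^^ e) = b ^^^ (a ^^^ e) := by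
  rw [← Nat.xor_assoc, Nat.xor_comm a b, Nat.xor_assoc]

lemma xor_rot2 (a b e : ℕ) : a ^^^ (b ^^^ e) = e ^^^ (a ^^^ b) := by
  rw [← Nat.xor_assoc, Nat.xor_comm]

/-- The supports of the weight-4 codewords of the extended Hamming code `H₁₆` form a
Steiner system `S(3,4,16)`: every 3-element set of coordinates is contained in the support
of exactly one weight-4 codeword. -/
theorem stmt7 (T : Finset (Fin 16)) (hT : T.card = 3) :
    ∃! c : Fin 16 → ZMod 2, c ∈ ham16 ∧
      (Finset.univ.filter fun i => c i ≠ 0).card = 4 ∧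
      ∀ i ∈ T, c i ≠ 0 := by
  obtain ⟨a, b, e, hab, hae, hbe, rfl⟩ := Finset.card_eq_three.mp hT
  have hlt : ∀ m : Fin 16, m.val < 2 ^ 4 := fun m => m.isLt
  obtain ⟨x, hxval⟩ : ∃ x : Fin 16, x.val = a.val ^^^ (b.val ^^^ e.val) :=
    ⟨⟨_, Nat.xor_lt_two_pow (hlt a) (Nat.xor_lt_two_pow (hlt b) (hlt e))⟩, rfl⟩
  have hxa : x ≠ a := fun h => hbe (Fin.ext (nat_xor3 (by rw [← hxval, h])))
  have hxb : x ≠ b := fun h => hae (Fin.ext (nat_xor3 (a := b.val) (by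
    rw [← xor_rot1, ← hxval, h])))
  have hxe : x ≠ e := fun h => hab (Fin.ext (nat_xor3 (a := e.val) (by
    rw [← xor_rot2, ← hxval, h])))
  set S : Finset (Fin 16) := insert x {a, b, e} with hS
  have hxT : x ∉ ({a, b, e} : Finset (Fin 16)) := by simp [hxa, hxb, hxe]
  have hScard : S.card = 4 := by
    rw [hS, Finset.card_insert_of_notMem hxT, hT]
  have hsumS : ∀ f : Fin 16 → ZMod 2, ∑ i ∈ S, f i = f x + (f a + (f b + f e)) := by
    intro f
    rw [hS, Finset.sum_insert hxT, Finset.sum_insert (by simp [hab, hae]),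
      Finset.sum_insert (by simp [hbe]), Finset.sum_singleton]
  set c : Fin 16 → ZMod 2 := fun i => if i ∈ S then 1 else 0 with hc
  have hsupp : (Finset.univ.filter fun i => c i ≠ 0) = S := by
    ext i; simp [hc]
  have hbitx : ∀ j : ℕ, Nat.testBit x.val j =
      (Nat.testBit a.val j ^^ (Nat.testBit b.val j ^^ Nat.testBit e.val j)) := by
    intro j; simp [hxval, Nat.testBit_xor]
  refine ⟨c, ⟨?_, ?_, ?_⟩, ?_⟩
  · -- membership
    rw [mem_ham16_iff]
    constructor
    · have h1 : ∑ i, c i = ∑ i ∈ Finset.univ.filter (fun i => c i ≠ 0), (1 : ZMod 2) := by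
        simpa using sum_support c (fun _ => 1)
      rw [h1, hsupp, hsumS]; decide
    · intro j
      rw [sum_support, hsupp, hsumS, hbitx j.val]
      cases Nat.testBit a.val j.val <;> cases Nat.testBit b.val j.val <;>
        cases Nat.testBit e.val j.val <;> decide
  · rw [hsupp]; exact hScard
  · intro i hi
    have : i ∈ S := by rw [hS]; exact Finset.mem_insert_of_mem hi
    simp [hc, this]
  · -- uniqueness
    rintro c' ⟨hmem, hw, hTsub⟩
    set S' : Finset (Fin 16) := Finset.univ.filter fun i => c' i ≠ 0 with hS'
    have hTS' : ({a, b, e} : Finset (Fin 16)) ⊆ S' := by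
      intro i hi; rw [hS', Finset.mem_filter]; exact ⟨Finset.mem_univ i, hTsub i hi⟩
    have hdcard : (S' \ {a, b, e}).card = 1 := by
      rw [Finset.card_sdiff_of_subset hTS', hw, hT]
    obtain ⟨y, hy⟩ := Finset.card_eq_one.mp hdcard
    have hyT : y ∉ ({a, b, e} : Finset (Fin 16)) := by
      have : y ∈ S' \ {a, b, e} := hy ▸ Finset.mem_singleton_self y
      exact (Finset.mem_sdiff.mp this).2
    have hS'eq : S' = insert y {a, b, e} := by
      have h1 : S' = ({a,b,e} : Finset (Fin 16)) ∪ (S' \ {a,b,e}) :=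
        (Finset.union_sdiff_of_subset hTS').symm
      rw [h1, hy, Finset.union_comm]
      exact (Finset.insert_eq y _).symm
    have hsumS' : ∀ f : Fin 16 → ZMod 2, ∑ i ∈ S', f i = f y + (f a + (f b + f e)) := by
      intro f
      rw [hS'eq, Finset.sum_insert hyT, Finset.sum_insert (by simp [hab, hae]),
        Finset.sum_insert (by simp [hbe]), Finset.sum_singleton]
    have hyx : y = x := by
      have hbits := ((mem_ham16_iff c').mp hmem).2
      apply Fin.ext
      apply Nat.eq_of_testBit_eq
      intro j
      by_cases hj : j < 4
      · have h := hbits ⟨j, hj⟩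
        rw [sum_support, ← hS', hsumS'] at h
        rw [zmod2_four _ _ _ _ h, hbitx j]
      · have h16 : ∀ m : Fin 16, Nat.testBit m.val j = false := by
          intro m
          apply Nat.testBit_lt_two_pow
          calc m.val < 2 ^ 4 := m.isLt
            _ ≤ 2 ^ j := Nat.pow_le_pow_right (by norm_num) (by omega)
        rw [h16, h16]
    have hS'S : S' = S := by rw [hS'eq, hyx, hS]
    funext i
    by_cases hi : i ∈ S
    · have hi' : c' i ≠ 0 := by
        have : i ∈ S' := hS'S ▸ hi
        rw [hS', Finset.mem_filter] at this; exact this.2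
      rw [zmod2_ne_zero hi']; simp [hc, hi]
    · have hi' : c' i = 0 := by
        by_contra h0
        exact hi (hS'S ▸ (Finset.mem_filter.mpr ⟨Finset.mem_univ i, h0⟩))
      rw [hi']; simp [hc, hi]
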